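/- arXiv:2104.12318 — 2 statements merged into one kernel-verified Lean document; each statement's English description precedes it below -/
import Mathlib

section
/- In a simply-laced triangle-free Coxeter system, if α is a link of rank r ≥ 2, then for each 1 ≤ i ≤ r−1 there exists a reduced expression σ braid equivalent to α such that both ⟦2i−1,2i+1⟧ and ⟦2i+1,2i+3⟧ are braid shadows of σ; that is, consecutive braid shadows of a braid chain can be made to occur simultaneously in a single reduced expression. -/
open List

namespace BraidFormal

variable {B : Type*}

/-- A single braid move: replace a factor `s t s` with `t s t` where `m(s,t) = 3`. -/
def IsBraidMove (M : CoxeterMatrix B) (w w' : List B) : Prop :=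
  ∃ (u v : List B) (s t : B), M s t = 3 ∧
    w = u ++ [s, t, s] ++ v ∧ w' = u ++ [t, s, t] ++ v

/-- Braid equivalence: the reflexive-transitive closure of braid moves. -/
def BraidEquiv (M : CoxeterMatrix B) : List B → List B → Prop :=
  Relation.ReflTransGen (IsBraidMove M)

/-- The braid class of a word. -/
def BraidClass (M : CoxeterMatrix B) (α : List B) : Set (List B) :=
  {β | BraidEquiv M α β}

/-- `w` has a braid shadow at (0-based) positions `i, i+1, i+2`:
the letters there are `s, t, s` with `m(s,t) = 3`.
(This corresponds to the 1-based interval `⟦i+1, i+3⟧` of the paper.) -/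
def HasShadowAt (M : CoxeterMatrix B) (w : List B) (i : ℕ) : Prop :=
  ∃ s t : B, M s t = 3 ∧ w[i]? = some s ∧ w[i+1]? = some t ∧ w[i+2]? = some s

/-- The braid class of `α` has a braid shadow at position `i`. -/
def ClassHasShadowAt (M : CoxeterMatrix B) (α : List B) (i : ℕ) : Prop :=
  ∃ β ∈ BraidClass M α, HasShadowAt M β i

/-- The rank of a reduced expression: the number of braid shadows of its braid class. -/
noncomputable def rank (M : CoxeterMatrix B) (α : List B) : ℕ :=
  Set.ncard {i | ClassHasShadowAt M α i}

/-- A Coxeter matrix is simply laced if all entries are at most 3. -/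
def SimplyLaced (M : CoxeterMatrix B) : Prop := ∀ s t : B, M s t ≤ 3

/-- A Coxeter matrix is triangle free if its Coxeter graph has no three-cycles
(all of whose edges are labelled 3). -/
def TriangleFree (M : CoxeterMatrix B) : Prop :=
  ∀ s t u : B, s ≠ t → t ≠ u → s ≠ u → M s t = 3 → M t u = 3 → M s u ≠ 3

/-- The set of generators appearing in (0-based) position `k` of some word in the
braid class of `α`. -/
def classSupp (M : CoxeterMatrix B) (α : List B) (k : ℕ) : Set B :=
  {s | ∃ β ∈ BraidClass M α, β[k]? = some s}

/-- The set of generators appearing in (0-based) positions `i` through `j` of `w`. -/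
def suppInterval (w : List B) (i j : ℕ) : Set B :=
  {s | ∃ k, i ≤ k ∧ k ≤ j ∧ w[k]? = some s}

variable {W : Type*} [Group W] {M : CoxeterMatrix B}

/-- `α` is a link of rank `r`: a reduced expression of length `2r+1` whose braid class
has braid shadows exactly at the (0-based) positions `0, 2, 4, …, 2r-2`
(the 1-based intervals `⟦1,3⟧, ⟦3,5⟧, …, ⟦2r-1,2r+1⟧`). -/
def IsLink (cs : CoxeterSystem M W) (α : List B) (r : ℕ) : Prop :=
  cs.IsReduced α ∧ α.length = 2 * r + 1 ∧
    ∀ i : ℕ, ClassHasShadowAt M α i ↔ ∃ j < r, i = 2 * j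

/-- A Fibonacci link: a link all of whose braid-class braid shadows are braid shadows
of the link itself. -/
def IsFibLink (cs : CoxeterSystem M W) (φ : List B) (r : ℕ) : Prop :=
  IsLink cs φ r ∧ ∀ i : ℕ, ClassHasShadowAt M φ i → HasShadowAt M φ i

section Aux

variable {M : CoxeterMatrix B}

lemma coxeter_symm (M : CoxeterMatrix B) (s t : B) : M s t = M t s := M.isSymm.apply t s

/-- A braid move at an explicit position `p`. -/
def MoveAt (M : CoxeterMatrix B) (p : ℕ) (w w' : List B) : Prop :=
  ∃ (u v : List B) (s t : B), M s t = 3 ∧ u.length = p ∧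
    w = u ++ [s, t, s] ++ v ∧ w' = u ++ [t, s, t] ++ v

lemma isBraidMove_iff_exists_moveAt {w w' : List B} :
    IsBraidMove M w w' ↔ ∃ p, MoveAt M p w w' := by
  constructor
  · rintro ⟨u, v, s, t, h3, rfl, rfl⟩
    exact ⟨u.length, u, v, s, t, h3, rfl, rfl, rfl⟩
  · rintro ⟨p, u, v, s, t, h3, -, rfl, rfl⟩
    exact ⟨u, v, s, t, h3, rfl, rfl⟩

lemma moveAt_symm {p : ℕ} {w w' : List B} (h : MoveAt M p w w') : MoveAt M p w' w := by
  obtain ⟨u, v, s, t, h3, hl, rfl, rfl⟩ := h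
  exact ⟨u, v, t, s, (coxeter_symm M t s).trans h3, hl, rfl, rfl⟩

lemma braidMove_symm {w w' : List B} (h : IsBraidMove M w w') : IsBraidMove M w' w := by
  rw [isBraidMove_iff_exists_moveAt] at h ⊢
  obtain ⟨p, hp⟩ := h
  exact ⟨p, moveAt_symm hp⟩

lemma braidEquiv_symm {w w' : List B} (h : BraidEquiv M w w') : BraidEquiv M w' w :=
  haveI : Std.Symm (IsBraidMove M) := ⟨fun _ _ hm => braidMove_symm hm⟩
  (inferInstance : Std.Symm (Relation.ReflTransGen (IsBraidMove M))).symm _ _ h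

-- cells of `u ++ [a,b,c] ++ v` (note `++` is left associative)
lemma cells_lt {u v : List B} {a b c : B} {q : ℕ} (h : q < u.length) :
    (u ++ [a, b, c] ++ v)[q]? = u[q]? := by
  rw [List.getElem?_append_left (by simp; omega : q < (u ++ [a, b, c]).length)]
  exact List.getElem?_append_left h

lemma cells0 (u v : List B) (a b c : B) : (u ++ [a, b, c] ++ v)[u.length]? = some a := by
  rw [List.getElem?_append_left (by simp : u.length < (u ++ [a, b, c]).length)]
  rw [List.getElem?_append_right (le_refl _)]
  simp

lemma cells1 (u v : List B) (a b c : B) : (u ++ [a, b, c] ++ v)[u.length + 1]? = some b := by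
  rw [List.getElem?_append_left (by simp : u.length + 1 < (u ++ [a, b, c]).length)]
  rw [List.getElem?_append_right (by omega)]
  have e : u.length + 1 - u.length = 1 := by omega
  rw [e]; simp

lemma cells2 (u v : List B) (a b c : B) : (u ++ [a, b, c] ++ v)[u.length + 2]? = some c := by
  rw [List.getElem?_append_left (by simp : u.length + 2 < (u ++ [a, b, c]).length)]
  rw [List.getElem?_append_right (by omega)]
  have e : u.length + 2 - u.length = 2 := by omega
  rw [e]; simp

lemma cells_ge {u v : List B} {a b c : B} {q : ℕ} (h : u.length + 3 ≤ q) :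
    (u ++ [a, b, c] ++ v)[q]? = v[q - (u.length + 3)]? := by
  rw [List.getElem?_append_right (by simp; omega : (u ++ [a, b, c]).length ≤ q)]
  congr 1
  simp

namespace MoveAt

variable {p : ℕ} {w w' : List B}

lemma sdw (h : MoveAt M p w w') : HasShadowAt M w p := by
  obtain ⟨u, v, s, t, h3, hl, rfl, rfl⟩ := h
  subst hl
  exact ⟨s, t, h3, cells0 u v s t s, cells1 u v s t s, cells2 u v s t s⟩

lemma sdw' (h : MoveAt M p w w') : HasShadowAt M w' p :=
  (moveAt_symm h).sdw

lemma eq_outside (h : MoveAt M p w w') {q : ℕ} (hq : q < p ∨ p + 3 ≤ q) :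
    w'[q]? = w[q]? := by
  obtain ⟨u, v, s, t, h3, hl, rfl, rfl⟩ := h
  subst hl
  rcases hq with hq | hq
  · rw [cells_lt hq, cells_lt hq]
  · rw [cells_ge hq, cells_ge hq]

lemma g0' (h : MoveAt M p w w') : w'[p]? = w[p+1]? := by
  obtain ⟨u, v, s, t, h3, hl, rfl, rfl⟩ := h
  subst hl
  rw [cells0, cells1]

lemma g1' (h : MoveAt M p w w') : w'[p+1]? = w[p]? := by
  obtain ⟨u, v, s, t, h3, hl, rfl, rfl⟩ := h
  subst hl
  rw [cells0, cells1]

lemma g2' (h : MoveAt M p w w') : w'[p+2]? = w[p+1]? := by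
  obtain ⟨u, v, s, t, h3, hl, rfl, rfl⟩ := h
  subst hl
  rw [cells2, cells1]

lemma g02 (h : MoveAt M p w w') : w[p]? = w[p+2]? := by
  obtain ⟨u, v, s, t, h3, hl, rfl, rfl⟩ := h
  subst hl
  rw [cells0, cells2]

end MoveAt

/-- Build a braid move from a shadow pattern. -/
lemma build_move {w : List B} {p : ℕ} {s t : B} (h3 : M s t = 3)
    (h0 : w[p]? = some s) (h1 : w[p+1]? = some t) (h2 : w[p+2]? = some s) :
    ∃ w', MoveAt M p w w' := by
  have hl : p + 2 < w.length := (List.getElem?_eq_some_iff.mp h2).1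
  have e0 : w[p] = s := by
    have := List.getElem?_eq_getElem (l := w) (i := p) (by omega)
    rw [this] at h0; exact Option.some.inj h0
  have e1 : w[p+1] = t := by
    have := List.getElem?_eq_getElem (l := w) (i := p+1) (by omega)
    rw [this] at h1; exact Option.some.inj h1
  have e2 : w[p+2] = s := by
    have := List.getElem?_eq_getElem (l := w) (i := p+2) (by omega)
    rw [this] at h2; exact Option.some.inj h2
  have hdrop : w.drop p = s :: t :: s :: w.drop (p+3) := by
    rw [List.drop_eq_getElem_cons (by omega : p < w.length), e0]
    rw [List.drop_eq_getElem_cons (by omega : p + 1 < w.length), e1]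
    rw [List.drop_eq_getElem_cons (by omega : p + 2 < w.length), e2]
  have hdecomp : w = w.take p ++ [s, t, s] ++ w.drop (p+3) := by
    conv_lhs => rw [← List.take_append_drop p w, hdrop]
    simp
  refine ⟨w.take p ++ [t, s, t] ++ w.drop (p+3),
    w.take p, w.drop (p+3), s, t, h3, ?_, hdecomp, rfl⟩
  simp [List.length_take]
  omega

/-- Cells untouched by all moves along a path are constant. -/
lemma path_const {f : ℕ → List B} {n q : ℕ}
    (h : ∀ i, i < n → ∃ p, MoveAt M p (f i) (f (i+1)) ∧ (q < p ∨ p + 3 ≤ q)) :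
    ∀ i, i ≤ n → (f i)[q]? = (f 0)[q]? := by
  intro i
  induction i with
  | zero => exact fun _ => rfl
  | succ k ih =>
    intro hk
    obtain ⟨p, hm, hq⟩ := h k (by omega)
    rw [hm.eq_outside hq]
    exact ih (by omega)


/-- Cells untouched by all moves along a path segment are constant. -/
lemma path_const_from {M : CoxeterMatrix B} {f : ℕ → List B} {n q i₀ : ℕ}
    (h : ∀ i, i₀ ≤ i → i < n → ∃ p, MoveAt M p (f i) (f (i+1)) ∧ (q < p ∨ p + 3 ≤ q)) :
    ∀ i, i₀ ≤ i → i ≤ n → (f i)[q]? = (f i₀)[q]? := by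
  intro i
  induction i with
  | zero =>
    intro h0 _
    have e : i₀ = 0 := by omega
    rw [e]
  | succ k ih =>
    intro h0 hk
    by_cases hik : i₀ = k + 1
    · rw [hik]
    · obtain ⟨p, hm, hq⟩ := h k (by omega) (by omega)
      rw [hm.eq_outside hq]
      exact ih (by omega) (by omega)

/-- Pair invariant: if each step either swaps the cells `a, a+1` or leaves them alone,
then at each time the pair is the original pair or its swap. -/
lemma path_pair {f : ℕ → List B} {n a : ℕ}
    (h : ∀ i, i < n →
      ((f (i+1))[a]? = (f i)[a+1]? ∧ (f (i+1))[a+1]? = (f i)[a]?) ∨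
      ((f (i+1))[a]? = (f i)[a]? ∧ (f (i+1))[a+1]? = (f i)[a+1]?)) :
    ∀ i, i ≤ n →
      ((f i)[a]? = (f 0)[a]? ∧ (f i)[a+1]? = (f 0)[a+1]?) ∨
      ((f i)[a]? = (f 0)[a+1]? ∧ (f i)[a+1]? = (f 0)[a]?) := by
  intro i
  induction i with
  | zero => exact fun _ => Or.inl ⟨rfl, rfl⟩
  | succ k ih =>
    intro hk
    rcases h k (by omega) with ⟨e1, e2⟩ | ⟨e1, e2⟩ <;>
      rcases ih (by omega) with ⟨d1, d2⟩ | ⟨d1, d2⟩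
    · exact Or.inr ⟨e1.trans d2, e2.trans d1⟩
    · exact Or.inl ⟨e1.trans d2, e2.trans d1⟩
    · exact Or.inl ⟨e1.trans d1, e2.trans d2⟩
    · exact Or.inr ⟨e1.trans d1, e2.trans d2⟩

/-- Extract an indexed path from a braid equivalence. -/
lemma braidEquiv_exists_path {w w' : List B} (h : BraidEquiv M w w') :
    ∃ (n : ℕ) (f : ℕ → List B), f 0 = w ∧ f n = w' ∧
      ∀ i, i < n → IsBraidMove M (f i) (f (i+1)) := by
  induction h with
  | refl => exact ⟨0, fun _ => w, rfl, rfl, fun i hi => absurd hi (by omega)⟩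
  | tail _ hmove ih =>
    obtain ⟨n, f, h0, hn, hm⟩ := ih
    rename_i c c' _
    refine ⟨n + 1, fun i => if i ≤ n then f i else c', ?_, ?_, ?_⟩
    · simp [h0]
    · simp
    · intro i hi
      by_cases hin : i < n
      · have e1 : (if i ≤ n then f i else c') = f i := if_pos (by omega)
        have e2 : (if i + 1 ≤ n then f (i+1) else c') = f (i+1) := if_pos (by omega)
        show IsBraidMove M (if i ≤ n then f i else c') (if i + 1 ≤ n then f (i+1) else c')
        rw [e1, e2]; exact hm i hin
      · have e : i = n := by omega
        subst e
        have e1 : (if i ≤ i then f i else c') = f i := if_pos (le_refl _)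
        have e2 : (if i + 1 ≤ i then f (i+1) else c') = c' := if_neg (by omega)
        show IsBraidMove M (if i ≤ i then f i else c') (if i + 1 ≤ i then f (i+1) else c')
        rw [e1, e2, hn]
        exact hmove


lemma key_lemma {M : CoxeterMatrix B} (α : List B)
    (hEven : ∀ δ p, BraidEquiv M α δ → HasShadowAt M δ p → p % 2 = 0) (j : ℕ) :
    ∀ n : ℕ, ∀ f : ℕ → List B,
      BraidEquiv M α (f 0) →
      (∀ i, i < n → IsBraidMove M (f i) (f (i+1))) →
      HasShadowAt M (f 0) (2*j) → HasShadowAt M (f n) (2*j+2) →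
      ∃ σ, BraidEquiv M α σ ∧ HasShadowAt M σ (2*j) ∧ HasShadowAt M σ (2*j+2) := by
  intro n
  induction n using Nat.strong_induction_on with
  | _ n IH =>
  intro f hf0 hmov hA hB
  classical
  rcases Nat.eq_zero_or_pos n with hn0 | hn0
  · subst hn0
    exact ⟨f 0, hf0, hA, hB⟩
  have hcls : ∀ i, i ≤ n → BraidEquiv M α (f i) := by
    intro i
    induction i with
    | zero => exact fun _ => hf0
    | succ k ih =>
      exact fun hk => Relation.ReflTransGen.tail (ih (by omega)) (hmov k (by omega))
  have hex : ∀ i, ∃ p, i < n → MoveAt M p (f i) (f (i+1)) ∧ p % 2 = 0 := by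
    intro i
    by_cases hi : i < n
    · obtain ⟨p, hp⟩ := isBraidMove_iff_exists_moveAt.mp (hmov i hi)
      exact ⟨p, fun _ => ⟨hp, hEven (f i) p (hcls i (by omega)) hp.sdw⟩⟩
    · exact ⟨0, fun h => absurd h hi⟩
  choose Q hQ using hex
  by_cases hcen : ∃ i, i < n ∧ (Q i = 2*j ∨ Q i = 2*j+2)
  · obtain ⟨k, hk, hk2⟩ := hcen
    have hmk := (hQ k hk).1
    rcases hk2 with hQk | hQk
    · -- central move at 2j : pass to the suffix path
      rw [hQk] at hmk
      obtain ⟨σ, h1, h2, h3⟩ := IH (n-(k+1)) (by omega) (fun i => f (k+1+i))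
        (hcls (k+1) (by omega))
        (fun i hi => hmov (k+1+i) (by omega))
        hmk.sdw'
        (by show HasShadowAt M (f (k+1+(n-(k+1)))) (2*j+2)
            rw [show k+1+(n-(k+1)) = n from by omega]
            exact hB)
      exact ⟨σ, h1, h2, h3⟩
    · -- central move at 2j+2 : pass to the prefix path
      rw [hQk] at hmk
      exact IH k (by omega) f hf0 (fun i hi => hmov i (by omega)) hA hmk.sdw
  · push_neg at hcen
    obtain ⟨x, y, hxy, hA0, hA1, hA2⟩ := hA
    obtain ⟨x', d, hx'd, hB0, hB1, hB2⟩ := hB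
    -- cells 2j+1, 2j+2, 2j+3 are constant along the path
    have hconst : ∀ q, 2*j+1 ≤ q → q ≤ 2*j+3 → ∀ i, i ≤ n → (f i)[q]? = (f 0)[q]? := by
      intro q hq1 hq2 i hi
      refine path_const_from (i₀ := 0) (fun i' _ hi' => ⟨Q i', (hQ i' hi').1, ?_⟩) i
        (Nat.zero_le i) hi
      have he := (hQ i' hi').2
      have hne := hcen i' hi'
      omega
    have hx' : x' = x := by
      have e1 : (f n)[2*j+2]? = (f 0)[2*j+2]? :=
        hconst (2*j+2) (by omega) (by omega) n (le_refl n)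
      rw [hB0, hA2] at e1
      exact Option.some.inj e1
    rw [hx'] at hx'd hB0 hB2
    clear hx'
    have hB1' : (f n)[2*j+3]? = some d := hB1
    have hB2' : (f n)[2*j+4]? = some x := hB2
    have hBn : HasShadowAt M (f n) (2*j+2) := ⟨x, d, hx'd, hB0, hB1, hB2⟩
    have hAn : HasShadowAt M (f 0) (2*j) := ⟨x, y, hxy, hA0, hA1, hA2⟩
    have hd0 : (f 0)[2*j+3]? = some d :=
      (hconst (2*j+3) (by omega) (by omega) n (le_refl n)).symm.trans hB1'
    have hyn : (f n)[2*j+1]? = some y :=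
      (hconst (2*j+1) (by omega) (by omega) n (le_refl n)).trans hA1
    by_cases hQn : (f n)[2*j]? = some x
    · exact ⟨f n, hcls n (le_refl n), ⟨x, y, hxy, hQn, hyn, hB0⟩, hBn⟩
    by_cases hS0 : (f 0)[2*j+4]? = some x
    · exact ⟨f 0, hf0, hAn, ⟨x, d, hx'd, hA2, hd0, hS0⟩⟩
    -- LEFT ANALYSIS -----------------------------------------------------
    have hLex : ∃ i, i < n ∧ Q i + 2 = 2*j := by
      by_contra hno
      push_neg at hno
      have hcst : (f n)[2*j]? = (f 0)[2*j]? := by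
        refine path_const_from (i₀ := 0) (fun i _ hi => ⟨Q i, (hQ i hi).1, ?_⟩) n (by omega)
          (le_refl n)
        have he := (hQ i hi).2
        have hne := hcen i hi
        have h3 := hno i hi
        omega
      rw [hA0] at hcst
      exact hQn hcst
    obtain ⟨i₀, hi₀n, hi₀⟩ := hLex
    have hj1 : 1 ≤ j := by omega
    have hlen0 : 2*j+2 < (f 0).length := (List.getElem?_eq_some_iff.mp hA2).1
    obtain ⟨z, hz⟩ : ∃ z, (f 0)[2*j-1]? = some z :=
      ⟨(f 0)[2*j-1], List.getElem?_eq_getElem (by omega)⟩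
    have hpairL : ∀ i, i ≤ n →
        ((f i)[2*j-1]? = some z ∧ (f i)[2*j]? = some x) ∨
        ((f i)[2*j-1]? = some x ∧ (f i)[2*j]? = some z) := by
      have e1 : 2*j-1+1 = 2*j := by omega
      have hsupply : ∀ i, i < n →
          ((f (i+1))[2*j-1]? = (f i)[2*j-1+1]? ∧ (f (i+1))[2*j-1+1]? = (f i)[2*j-1]?) ∨
          ((f (i+1))[2*j-1]? = (f i)[2*j-1]? ∧ (f (i+1))[2*j-1+1]? = (f i)[2*j-1+1]?) := by
        intro i hi
        have hm := (hQ i hi).1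
        by_cases hQi : Q i + 2 = 2*j
        · left
          rw [show (2*j-1 : ℕ) = Q i + 1 from by omega]
          exact ⟨hm.g1'.trans hm.g02, hm.g2'⟩
        · right
          have he := (hQ i hi).2
          have hne := hcen i hi
          exact ⟨hm.eq_outside (by omega), hm.eq_outside (by omega)⟩
      intro i hi
      have := path_pair (n := n) (a := 2*j-1) hsupply i hi
      rw [e1, hz, hA0] at this
      exact this
    have hLn : (f n)[2*j-1]? = some x ∧ (f n)[2*j]? = some z := by
      rcases hpairL n (le_refl n) with ⟨h1, h2⟩ | h
      · exact absurd h2 hQn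
      · exact h
    have hxz : M x z = 3 := by
      obtain ⟨s₀, t₀, h30, c0, c1, c2⟩ := (hQ i₀ hi₀n).1.sdw
      rw [show Q i₀ + 1 = 2*j-1 from by omega] at c1
      rw [show Q i₀ + 2 = 2*j from by omega] at c2
      rcases hpairL i₀ (by omega) with ⟨e1, e2⟩ | ⟨e1, e2⟩
      · rw [c1] at e1; rw [c2] at e2
        rw [Option.some.inj e1, Option.some.inj e2] at h30
        exact h30
      · rw [c1] at e1; rw [c2] at e2
        rw [Option.some.inj e1, Option.some.inj e2] at h30
        rw [coxeter_symm]
        exact h30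
    -- last move at 2j-2
    set P : ℕ → Prop := fun i => i < n ∧ Q i + 2 = 2*j with hPdef
    set m' := Nat.findGreatest P n with hm'def
    have hPm' : P m' := Nat.findGreatest_spec (le_of_lt hi₀n) ⟨hi₀n, hi₀⟩
    have hlast : ∀ i, m' < i → i < n → Q i + 2 ≠ 2*j := by
      intro i h1 h2 hc
      exact Nat.findGreatest_is_greatest h1 (by omega) ⟨h2, hc⟩
    have hm'n : m' < n := hPm'.1
    have hQm' : Q m' + 2 = 2*j := hPm'.2
    -- cells (2j-1, 2j) constant on [m'+1, n]
    have hconstL : ∀ q, (q = 2*j-1 ∨ q = 2*j) → (f n)[q]? = (f (m'+1))[q]? := by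
      intro q hq
      refine path_const_from (i₀ := m'+1) (fun i h1 hi => ⟨Q i, (hQ i hi).1, ?_⟩) n
        (by omega) (le_refl n)
      have he := (hQ i hi).2
      have hne := hcen i hi
      have h3 := hlast i (by omega) hi
      omega
    have hLm'1 : (f (m'+1))[2*j-1]? = some x :=
      (hconstL (2*j-1) (Or.inl rfl)).symm.trans hLn.1
    have hLm'2 : (f (m'+1))[2*j]? = some z :=
      (hconstL (2*j) (Or.inr rfl)).symm.trans hLn.2
    have hmm' := (hQ m' hm'n).1
    -- cells of f (m'+1) at (Q m', Q m'+1, Q m'+2) = (z, x, z)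
    obtain ⟨t', s', h3', c0', c1', c2'⟩ := hmm'.sdw'
    rw [show Q m' + 1 = 2*j-1 from by omega] at c1'
    rw [show Q m' + 2 = 2*j from by omega] at c2'
    have hs' : s' = x := by rw [c1'] at hLm'1; exact Option.some.inj hLm'1
    have ht' : t' = z := by rw [c2'] at hLm'2; exact Option.some.inj hLm'2
    rw [ht'] at c0'
    -- build σ with a move at 2j-2 on f (m'+1)
    obtain ⟨σ, hσm⟩ := build_move (M := M) ((coxeter_symm M z x).trans hxz) c0'
      (by rw [show Q m' + 1 = 2*j-1 from by omega]; exact hLm'1)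
      (by rw [show Q m' + 2 = 2*j from by omega]; exact hLm'2)
    have hσ2j : σ[2*j]? = some x := by
      have := hσm.g2'
      rw [show Q m' + 2 = 2*j from by omega, show Q m' + 1 = 2*j-1 from by omega] at this
      exact this.trans hLm'1
    have hσ2j1 : σ[2*j+1]? = some y := by
      have e := hσm.eq_outside (q := 2*j+1) (by omega)
      rw [e]
      exact (hconst (2*j+1) (by omega) (by omega) (m'+1) (by omega)).trans hA1
    have hσ2j2 : σ[2*j+2]? = some x := by
      have e := hσm.eq_outside (q := 2*j+2) (by omega)
      rw [e]
      exact (hconst (2*j+2) (by omega) (by omega) (m'+1) (by omega)).trans hA2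
    have hσA : HasShadowAt M σ (2*j) := ⟨x, y, hxy, hσ2j, hσ2j1, hσ2j2⟩
    have hσcls : BraidEquiv M α σ :=
      Relation.ReflTransGen.tail (hcls (m'+1) (by omega))
        (isBraidMove_iff_exists_moveAt.mpr ⟨_, hσm⟩)
    by_cases hm'pos : 1 ≤ m'
    · -- use the shorter path σ → f (m'+1) → ... → f n
      obtain ⟨σ', e1, e2, e3⟩ := IH (n - m') (by omega)
        (fun i => if i = 0 then σ else f (m'+i))
        (by show BraidEquiv M α (if 0 = 0 then σ else f (m'+0)); rw [if_pos rfl]; exact hσcls)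
        (by
          intro i hi
          by_cases hi0 : i = 0
          · subst hi0
            show IsBraidMove M (if 0 = 0 then σ else f (m'+0)) (if 1 = 0 then σ else f (m'+1))
            rw [if_pos rfl, if_neg (by omega)]
            exact braidMove_symm (isBraidMove_iff_exists_moveAt.mpr ⟨_, hσm⟩)
          · show IsBraidMove M (if i = 0 then σ else f (m'+i))
              (if i + 1 = 0 then σ else f (m'+(i+1)))
            rw [if_neg hi0, if_neg (by omega)]
            exact hmov (m'+i) (by omega))
        (by show HasShadowAt M (if 0 = 0 then σ else f (m'+0)) (2*j)
            rw [if_pos rfl]; exact hσA)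
        (by show HasShadowAt M (if n - m' = 0 then σ else f (m'+(n-m'))) (2*j+2)
            rw [if_neg (by omega), show m'+(n-m') = n from by omega]
            exact hBn)
      exact ⟨σ', e1, e2, e3⟩
    · -- m' = 0 : RIGHT ANALYSIS ----------------------------------------
      have hm'0 : m' = 0 := by omega
      have hRex : ∃ i, i < n ∧ Q i = 2*j+4 := by
        by_contra hno
        push_neg at hno
        have hcst : (f n)[2*j+4]? = (f 0)[2*j+4]? := by
          refine path_const_from (i₀ := 0) (fun i _ hi => ⟨Q i, (hQ i hi).1, ?_⟩) n
            (by omega) (le_refl n)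
          have he := (hQ i hi).2
          have hne := hcen i hi
          have h3 := hno i hi
          omega
        rw [hB2'] at hcst
        exact hS0 hcst.symm
      have hpairRsupply : ∀ i, i < n →
          ((f (i+1))[2*j+4]? = (f i)[2*j+4+1]? ∧ (f (i+1))[2*j+4+1]? = (f i)[2*j+4]?) ∨
          ((f (i+1))[2*j+4]? = (f i)[2*j+4]? ∧ (f (i+1))[2*j+4+1]? = (f i)[2*j+4+1]?) := by
        intro i hi
        have hm := (hQ i hi).1
        by_cases hQi : Q i = 2*j+4
        · left
          rw [show (2*j+4 : ℕ) = Q i from hQi.symm]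
          exact ⟨hm.g0', hm.g1'⟩
        · right
          have he := (hQ i hi).2
          have hne := hcen i hi
          exact ⟨hm.eq_outside (by omega), hm.eq_outside (by omega)⟩
      have hpairR := path_pair (n := n) (a := 2*j+4) hpairRsupply
      have hRn := hpairR n (le_refl n)
      have hA5x : (f 0)[2*j+4+1]? = some x := by
        rcases hRn with ⟨e1, e2⟩ | ⟨e1, e2⟩
        · rw [hB2'] at e1; exact absurd e1.symm hS0
        · rw [hB2'] at e1; exact e1.symm
      have hlen5 : 2*j+5 < (f 0).length := by
        have := (List.getElem?_eq_some_iff.mp hA5x).1; omega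
      obtain ⟨w', hw0⟩ : ∃ w'', (f 0)[2*j+4]? = some w'' :=
        ⟨(f 0)[2*j+4], List.getElem?_eq_getElem (by omega)⟩
      obtain ⟨i₁, hi₁n, hi₁⟩ := hRex
      have hxw' : M x w' = 3 := by
        obtain ⟨s₁, t₁, h31, d0, d1, d2⟩ := (hQ i₁ hi₁n).1.sdw
        rw [hi₁] at d0 d1
        rcases hpairR i₁ (by omega) with ⟨e1, e2⟩ | ⟨e1, e2⟩
        · rw [d0, hw0] at e1; rw [d1, hA5x] at e2
          rw [Option.some.inj e1, Option.some.inj e2] at h31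
          rw [coxeter_symm]; exact h31
        · rw [d0, hA5x] at e1; rw [d1, hw0] at e2
          rw [Option.some.inj e1, Option.some.inj e2] at h31
          exact h31
      have hRPex : ∃ i, i < n ∧ Q i = 2*j+4 := ⟨i₁, hi₁n, hi₁⟩
      set l1 := Nat.find hRPex with hl1def
      have hRl1 : l1 < n ∧ Q l1 = 2*j+4 := Nat.find_spec hRPex
      have hl1n : l1 < n := hRl1.1
      have hQl1 : Q l1 = 2*j+4 := hRl1.2
      have hmin : ∀ i, i < l1 → ¬(i < n ∧ Q i = 2*j+4) := fun i hi => Nat.find_min hRPex hi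
      have hconstR : ∀ q, (q = 2*j+4 ∨ q = 2*j+4+1) → (f l1)[q]? = (f 0)[q]? := by
        intro q hq
        refine path_const_from (i₀ := 0) (n := l1)
          (fun i _ hi => ⟨Q i, (hQ i (by omega)).1, ?_⟩) l1 (by omega) (le_refl l1)
        have he := (hQ i (by omega : i < n)).2
        have hne := hcen i (by omega)
        have h4 : ¬(i < n ∧ Q i = 2*j+4) := hmin i hi
        have h5 : Q i ≠ 2*j+4 := fun hc => h4 ⟨by omega, hc⟩
        omega
      have hml1 := (hQ l1 hl1n).1
      rw [hQl1] at hml1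
      have hfl4 : (f l1)[2*j+4]? = some w' := (hconstR (2*j+4) (Or.inl rfl)).trans hw0
      have hfl5 : (f l1)[2*j+4+1]? = some x := (hconstR _ (Or.inr rfl)).trans hA5x
      have hSl1 : HasShadowAt M (f (l1+1)) (2*j+2) := by
        refine ⟨x, d, hx'd, ?_, ?_, ?_⟩
        · exact (hconst (2*j+2) (by omega) (by omega) (l1+1) (by omega)).trans hA2
        · exact (hconst (2*j+3) (by omega) (by omega) (l1+1) (by omega)).trans hd0
        · exact hml1.g0'.trans hfl5
      by_cases hl1small : l1 + 1 < n
      · exact IH (l1+1) (by omega) f hf0 (fun i hi => hmov i (by omega)) hAn hSl1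
      · -- FINAL CASE : l1 = n-1, m' = 0
        have hl1eq : l1 + 1 = n := by omega
        have hQ0 : Q 0 + 2 = 2*j := by rw [← hm'0]; exact hQm'
        have hn2 : 2 ≤ n := by
          rcases Nat.lt_or_ge n 2 with h | h
          · exfalso
            have hl10 : l1 = 0 := by omega
            rw [hl10] at hQl1
            omega
          · exact h
        have hmid : ∀ i, 1 ≤ i → i + 1 < n → (2*j+6 ≤ Q i ∨ Q i + 4 ≤ 2*j) := by
          intro i h1 h2
          have he := (hQ i (by omega)).2
          have h3 := hcen i (by omega)
          have h4 := hlast i (by omega) (by omega)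
          have h5 : ¬(i < n ∧ Q i = 2*j+4) := hmin i (by omega)
          have h6 : Q i ≠ 2*j+4 := fun hc => h5 ⟨by omega, hc⟩
          omega
        have hm0 := (hQ 0 (by omega)).1
        obtain ⟨s₂, t₂, h32, a0, a1, a2⟩ := hm0.sdw
        have hs₂ : s₂ = x := by
          have a2' := a2
          rw [show Q 0 + 2 = 2*j from by omega] at a2'
          exact Option.some.inj (a2'.symm.trans hA0)
        have ht₂ : t₂ = z := by
          have a1' := a1
          rw [show Q 0 + 1 = 2*j-1 from by omega] at a1'
          exact Option.some.inj (a1'.symm.trans hz)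
        have hf1_0 : (f 1)[Q 0]? = some z := by rw [hm0.g0', a1, ht₂]
        have hf1_1 : (f 1)[Q 0+1]? = some x := by rw [hm0.g1', a0, hs₂]
        have hf1_2 : (f 1)[Q 0+2]? = some z := by rw [hm0.g2', a1, ht₂]
        have hf1_out : ∀ q, 2*j+1 ≤ q → (f 1)[q]? = (f 0)[q]? := by
          intro q hq
          exact hm0.eq_outside (Or.inr (by omega))
        have hfl6 : (f l1)[2*j+6]? = some w' := by
          obtain ⟨s₃, t₃, h33, b0, b1, b2⟩ := hml1.sdw
          have hs₃ : s₃ = w' := Option.some.inj (b0.symm.trans hfl4)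
          rw [← hs₃]
          exact b2
        have hproj : ∀ i, 1 ≤ i → i ≤ n-1 → ∃ τ, BraidEquiv M α τ ∧
            (∀ q, q < 2*j+6 → τ[q]? = (f 1)[q]?) ∧
            (∀ q, 2*j+6 ≤ q → τ[q]? = (f i)[q]?) := by
          intro i
          induction i with
          | zero => intro h1 _; exact absurd h1 (by omega)
          | succ k ih =>
            intro h1 hk
            by_cases hk0 : k = 0
            · subst hk0
              exact ⟨f 1, hcls 1 (by omega), fun q _ => rfl, fun q _ => rfl⟩
            · obtain ⟨τ, hτ1, hτ2, hτ3⟩ := ih (by omega) (by omega)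
              have hmk := (hQ k (by omega)).1
              rcases hmid k (by omega) (by omega) with hbig | hsmall
              · obtain ⟨s₄, t₄, h34, n0, n1, n2⟩ := hmk.sdw
                have u0 : τ[Q k]? = some s₄ := (hτ3 _ (by omega)).trans n0
                have u1 : τ[Q k+1]? = some t₄ := (hτ3 _ (by omega)).trans n1
                have u2 : τ[Q k+2]? = some s₄ := (hτ3 _ (by omega)).trans n2
                obtain ⟨τ', hτ'm⟩ := build_move h34 u0 u1 u2
                refine ⟨τ', Relation.ReflTransGen.tail hτ1
                  (isBraidMove_iff_exists_moveAt.mpr ⟨_, hτ'm⟩), ?_, ?_⟩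
                · intro q hq
                  rw [hτ'm.eq_outside (Or.inl (by omega))]
                  exact hτ2 q hq
                · intro q hq
                  by_cases hqa : q < Q k
                  · rw [hτ'm.eq_outside (Or.inl hqa), hτ3 q hq,
                      ← hmk.eq_outside (Or.inl hqa)]
                  · by_cases hqb : Q k + 3 ≤ q
                    · rw [hτ'm.eq_outside (Or.inr hqb), hτ3 q hq,
                        ← hmk.eq_outside (Or.inr hqb)]
                    · have hqc : q = Q k ∨ q = Q k + 1 ∨ q = Q k + 2 := by omega
                      rcases hqc with rfl | rfl | rfl
                      · rw [hτ'm.g0', hmk.g0', u1, n1]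
                      · rw [hτ'm.g1', hmk.g1', u0, n0]
                      · rw [hτ'm.g2', hmk.g2', u1, n1]
              · refine ⟨τ, hτ1, hτ2, ?_⟩
                intro q hq
                rw [hτ3 q hq, ← hmk.eq_outside (Or.inr (by omega))]
        obtain ⟨τ₁, hτ₁cls, hτ₁lo, hτ₁hi⟩ := hproj (n-1) (by omega) (le_refl _)
        have hτ₁6 : τ₁[2*j+6]? = some w' := by
          rw [hτ₁hi (2*j+6) (le_refl _), show n-1 = l1 from by omega]
          exact hfl6
        have hτ₁4 : τ₁[2*j+4]? = some w' := by
          rw [hτ₁lo (2*j+4) (by omega), hf1_out (2*j+4) (by omega)]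
          exact hw0
        have hτ₁5 : τ₁[2*j+4+1]? = some x := by
          rw [hτ₁lo (2*j+4+1) (by omega), hf1_out (2*j+4+1) (by omega)]
          exact hA5x
        obtain ⟨τ₂, hτ₂m⟩ := build_move (M := M) (s := w') (t := x)
          ((coxeter_symm M w' x).trans hxw') hτ₁4 hτ₁5 hτ₁6
        have hτ₂_left : ∀ q, q ≤ 2*j+3 → τ₂[q]? = τ₁[q]? := by
          intro q hq
          exact hτ₂m.eq_outside (Or.inl (by omega))
        have hτ₂_2j1 : τ₂[2*j+1]? = some y := by
          rw [hτ₂_left (2*j+1) (by omega), hτ₁lo (2*j+1) (by omega),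
            hf1_out (2*j+1) (by omega)]
          exact hA1
        have hτ₂_2j2 : τ₂[2*j+2]? = some x := by
          rw [hτ₂_left (2*j+2) (by omega), hτ₁lo (2*j+2) (by omega),
            hf1_out (2*j+2) (by omega)]
          exact hA2
        have hτ₂_2j3 : τ₂[2*j+3]? = some d := by
          rw [hτ₂_left (2*j+3) (by omega), hτ₁lo (2*j+3) (by omega),
            hf1_out (2*j+3) (by omega)]
          exact hd0
        have hτ₂_2j4 : τ₂[2*j+4]? = some x := by
          rw [hτ₂m.g0']
          exact hτ₁5
        have hτ₂_q0 : τ₂[Q 0]? = some z := by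
          rw [hτ₂_left (Q 0) (by omega), hτ₁lo (Q 0) (by omega)]
          exact hf1_0
        have hτ₂_q1 : τ₂[Q 0+1]? = some x := by
          rw [hτ₂_left (Q 0+1) (by omega), hτ₁lo (Q 0+1) (by omega)]
          exact hf1_1
        have hτ₂_q2 : τ₂[Q 0+2]? = some z := by
          rw [hτ₂_left (Q 0+2) (by omega), hτ₁lo (Q 0+2) (by omega)]
          exact hf1_2
        obtain ⟨τ₃, hτ₃m⟩ := build_move (M := M) (s := z) (t := x)
          ((coxeter_symm M z x).trans hxz) hτ₂_q0 hτ₂_q1 hτ₂_q2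
        have final0 : τ₃[2*j]? = some x := by
          have hg := hτ₃m.g2'
          rw [show Q 0 + 2 = 2*j from by omega] at hg
          rw [hg]
          exact hτ₂_q1
        have final1 : τ₃[2*j+1]? = some y := by
          rw [hτ₃m.eq_outside (Or.inr (by omega))]; exact hτ₂_2j1
        have final2 : τ₃[2*j+2]? = some x := by
          rw [hτ₃m.eq_outside (Or.inr (by omega))]; exact hτ₂_2j2
        have final3 : τ₃[2*j+3]? = some d := by
          rw [hτ₃m.eq_outside (Or.inr (by omega))]; exact hτ₂_2j3
        have final4 : τ₃[2*j+4]? = some x := by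
          rw [hτ₃m.eq_outside (Or.inr (by omega))]; exact hτ₂_2j4
        have hτ₃cls : BraidEquiv M α τ₃ :=
          Relation.ReflTransGen.tail (Relation.ReflTransGen.tail hτ₁cls
            (isBraidMove_iff_exists_moveAt.mpr ⟨_, hτ₂m⟩))
            (isBraidMove_iff_exists_moveAt.mpr ⟨_, hτ₃m⟩)
        exact ⟨τ₃, hτ₃cls, ⟨x, y, hxy, final0, final1, final2⟩,
          ⟨x, d, hx'd, final2, final3, final4⟩⟩

end Aux


/-- consecutive braid shadows of a braid chain can be made to occur
simultaneously.  (Here `j + 1` plays the role of the paper's index `i`,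
`1 ≤ i ≤ r - 1`; the 1-based intervals `⟦2i-1,2i+1⟧` and `⟦2i+1,2i+3⟧` start at the
0-based positions `2j` and `2j+2`.) -/
theorem statement_7 {B W : Type*} [Group W] {M : CoxeterMatrix B}
    (cs : CoxeterSystem M W) (hsl : SimplyLaced M) (htf : TriangleFree M)
    (α : List B) (r : ℕ) (hlink : IsLink cs α r) (hr : 2 ≤ r)
    (j : ℕ) (hj : j + 2 ≤ r) :
    ∃ σ ∈ BraidClass M α, HasShadowAt M σ (2 * j) ∧ HasShadowAt M σ (2 * j + 2) := by
  obtain ⟨-, -, hiff⟩ := hlink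
  have hEven : ∀ δ p, BraidEquiv M α δ → HasShadowAt M δ p → p % 2 = 0 := by
    intro δ p hδ hsh
    obtain ⟨j', hj', e⟩ := (hiff p).mp ⟨δ, hδ, hsh⟩
    omega
  have hcA : ClassHasShadowAt M α (2*j) := (hiff (2*j)).mpr ⟨j, by omega, rfl⟩
  have hcB : ClassHasShadowAt M α (2*j+2) := (hiff (2*j+2)).mpr ⟨j+1, by omega, by ring⟩
  obtain ⟨β, hβ, hβsh⟩ := hcA
  obtain ⟨γ, hγ, hγsh⟩ := hcB
  have hβγ : BraidEquiv M β γ := Relation.ReflTransGen.trans (braidEquiv_symm hβ) hγ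
  obtain ⟨n, f, hf0, hfn, hmov⟩ := braidEquiv_exists_path hβγ
  obtain ⟨σ, h1, h2, h3⟩ := key_lemma α hEven j n f
    (by rw [hf0]; exact hβ) hmov (by rw [hf0]; exact hβsh) (by rw [hfn]; exact hγsh)
  exact ⟨σ, h1, h2, h3⟩

end BraidFormal
end

section
/- In a simply-laced triangle-free Coxeter system, if φ is a Fibonacci link of rank r ≥ 0, then the braid class [φ] contains exactly F_{r+2} reduced expressions, where F_n denotes the n-th Fibonacci number (F₁ = F₂ = 1, F_n = F_{n−1} + F_{n−2}). -/
open List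

namespace BraidFormal

variable {B : Type*}

/-! ### Auxiliary development for statement 16 -/

section Aux

variable {B : Type*}

/-- Letter at position `n` of the word indexed by the set `S` of flipped shadows. -/
def letr (a : B) (b : ℕ → B) (S : Finset ℕ) (n : ℕ) : B :=
  if n % 2 = 1 then (if n / 2 ∈ S then a else b (n / 2))
  else if 1 ≤ n / 2 ∧ n / 2 - 1 ∈ S then b (n / 2 - 1)
  else if n / 2 ∈ S then b (n / 2) else a

/-- The word of length `2r+1` obtained from the basic Fibonacci link by flipping
the shadows in `S`. -/
def fibWord (a : B) (b : ℕ → B) (r : ℕ) (S : Finset ℕ) : List B :=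
  (List.range (2 * r + 1)).map (letr a b S)

lemma letr_odd (a : B) (b : ℕ → B) (S : Finset ℕ) (k : ℕ) :
    letr a b S (2 * k + 1) = if k ∈ S then a else b k := by
  have h1 : (2 * k + 1) % 2 = 1 := by omega
  have h2 : (2 * k + 1) / 2 = k := by omega
  simp [letr, h1, h2]

lemma letr_even (a : B) (b : ℕ → B) (S : Finset ℕ) (k : ℕ) :
    letr a b S (2 * k) = if 1 ≤ k ∧ k - 1 ∈ S then b (k - 1)
      else if k ∈ S then b k else a := by
  have h1 : (2 * k) % 2 = 0 := by omega
  have h2 : (2 * k) / 2 = k := by omega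
  simp [letr, h1, h2]

lemma letr_even_of_not (a : B) (b : ℕ → B) {S : Finset ℕ} {k : ℕ}
    (h1 : ¬(1 ≤ k ∧ k - 1 ∈ S)) (h2 : k ∉ S) : letr a b S (2 * k) = a := by
  rw [letr_even, if_neg h1, if_neg h2]

lemma letr_even_of_mem (a : B) (b : ℕ → B) {S : Finset ℕ} {k : ℕ}
    (h1 : ¬(1 ≤ k ∧ k - 1 ∈ S)) (h2 : k ∈ S) : letr a b S (2 * k) = b k := by
  rw [letr_even, if_neg h1, if_pos h2]

lemma letr_even_of_prev (a : B) (b : ℕ → B) {S : Finset ℕ} {k : ℕ}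
    (h1 : 1 ≤ k) (h2 : k - 1 ∈ S) : letr a b S (2 * k) = b (k - 1) := by
  rw [letr_even, if_pos ⟨h1, h2⟩]

lemma fibWord_length (a : B) (b : ℕ → B) (r : ℕ) (S : Finset ℕ) :
    (fibWord a b r S).length = 2 * r + 1 := by simp [fibWord]

lemma fibWord_getElem? (a : B) (b : ℕ → B) (r : ℕ) (S : Finset ℕ) (n : ℕ) :
    (fibWord a b r S)[n]? = if n < 2 * r + 1 then some (letr a b S n) else none := by
  by_cases h : n < 2 * r + 1
  · simp [fibWord, List.getElem?_map, List.getElem?_range h, h]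
  · rw [if_neg h, List.getElem?_eq_none]
    rw [fibWord_length]; omega

lemma fibWord_getElem?_lt (a : B) (b : ℕ → B) (r : ℕ) (S : Finset ℕ) {n : ℕ}
    (h : n < 2 * r + 1) :
    (fibWord a b r S)[n]? = some (letr a b S n) := by
  rw [fibWord_getElem?, if_pos h]

lemma letr_congr_outside {a : B} {b : ℕ → B} {S T : Finset ℕ} {j n : ℕ}
    (hmem : ∀ m, m ≠ j → (m ∈ S ↔ m ∈ T))
    (h0 : n ≠ 2*j) (h1 : n ≠ 2*j+1) (h2 : n ≠ 2*j+2) :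
    letr a b S n = letr a b T n := by
  obtain ⟨m, rfl | rfl⟩ : ∃ m, n = 2*m ∨ n = 2*m+1 := ⟨n/2, by omega⟩
  · have e2 : m ∈ S ↔ m ∈ T := hmem m (by omega)
    have e1 : (1 ≤ m ∧ m - 1 ∈ S) ↔ (1 ≤ m ∧ m - 1 ∈ T) := by
      constructor
      · rintro ⟨hm, hmm⟩; exact ⟨hm, (hmem (m-1) (by omega)).mp hmm⟩
      · rintro ⟨hm, hmm⟩; exact ⟨hm, (hmem (m-1) (by omega)).mpr hmm⟩
    rw [letr_even, letr_even]
    simp only [e1, e2]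
  · rw [letr_odd, letr_odd]
    simp only [hmem m (by omega)]

/-- Decomposing a list around three known consecutive entries. -/
lemma eq_take_append_drop {w : List B} {i : ℕ} {s t s' : B}
    (h0 : w[i]? = some s) (h1 : w[i+1]? = some t) (h2 : w[i+2]? = some s') :
    w = w.take i ++ [s, t, s'] ++ w.drop (i+3) := by
  have hlen : i + 2 < w.length := by
    by_contra h
    rw [List.getElem?_eq_none (by omega)] at h2
    cases h2
  have htake : (w.take i).length = i := by rw [List.length_take]; omega
  apply List.ext_getElem?
  intro n
  rw [List.append_assoc, List.getElem?_append, htake]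
  rcases (by omega : n < i ∨ n = i ∨ n = i + 1 ∨ n = i + 2 ∨ i + 3 ≤ n) with h | h | h | h | h
  · rw [if_pos h, List.getElem?_take, if_pos h]
  · subst h
    rw [if_neg (by omega), Nat.sub_self, List.getElem?_append, if_pos (by norm_num)]
    simpa using h0
  · subst h
    rw [if_neg (by omega), (by omega : i + 1 - i = 1), List.getElem?_append,
      if_pos (by norm_num)]
    simpa using h1
  · subst h
    rw [if_neg (by omega), (by omega : i + 2 - i = 2), List.getElem?_append,
      if_pos (by norm_num)]
    simpa using h2
  · rw [if_neg (by omega), List.getElem?_append_right (by simp; omega),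
      List.getElem?_drop]
    congr 1
    simp; omega

/-- Constructor form for `IsBraidMove` via positions. -/
lemma isBraidMove_of {M : CoxeterMatrix B} {x y : List B} {i : ℕ} {s t : B}
    (hst : M s t = 3)
    (hx0 : x[i]? = some s) (hx1 : x[i+1]? = some t) (hx2 : x[i+2]? = some s)
    (hy0 : y[i]? = some t) (hy1 : y[i+1]? = some s) (hy2 : y[i+2]? = some t)
    (hagree : ∀ k, k ≠ i → k ≠ i+1 → k ≠ i+2 → x[k]? = y[k]?) :
    IsBraidMove M x y := by
  refine ⟨x.take i, x.drop (i+3), s, t, hst, eq_take_append_drop hx0 hx1 hx2, ?_⟩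
  have h1 : y.take i = x.take i := by
    apply List.ext_getElem?
    intro n
    rw [List.getElem?_take, List.getElem?_take]
    split_ifs with h
    · exact (hagree n (by omega) (by omega) (by omega)).symm
    · rfl
  have h2 : y.drop (i+3) = x.drop (i+3) := by
    apply List.ext_getElem?
    intro n
    rw [List.getElem?_drop, List.getElem?_drop]
    exact (hagree _ (by omega) (by omega) (by omega)).symm
  rw [← h1, ← h2]
  exact eq_take_append_drop hy0 hy1 hy2

/-- Destructor form for `IsBraidMove` via positions. -/
lemma isBraidMove_elim {M : CoxeterMatrix B} {x y : List B} (h : IsBraidMove M x y) :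
    ∃ (i : ℕ) (s t : B), M s t = 3 ∧
      x[i]? = some s ∧ x[i+1]? = some t ∧ x[i+2]? = some s ∧
      y[i]? = some t ∧ y[i+1]? = some s ∧ y[i+2]? = some t ∧
      ∀ k, k ≠ i → k ≠ i+1 → k ≠ i+2 → x[k]? = y[k]? := by
  obtain ⟨u, v, s, t, hst, hx, hy⟩ := h
  refine ⟨u.length, s, t, hst, ?_, ?_, ?_, ?_, ?_, ?_, ?_⟩
  · rw [hx, List.append_assoc, List.getElem?_append_right le_rfl, Nat.sub_self]; rfl
  · rw [hx, List.append_assoc, List.getElem?_append_right (by omega),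
      (by omega : u.length + 1 - u.length = 1)]; rfl
  · rw [hx, List.append_assoc, List.getElem?_append_right (by omega),
      (by omega : u.length + 2 - u.length = 2)]; simp
  · rw [hy, List.append_assoc, List.getElem?_append_right le_rfl, Nat.sub_self]; rfl
  · rw [hy, List.append_assoc, List.getElem?_append_right (by omega),
      (by omega : u.length + 1 - u.length = 1)]; rfl
  · rw [hy, List.append_assoc, List.getElem?_append_right (by omega),
      (by omega : u.length + 2 - u.length = 2)]; simp
  · intro k hk0 hk1 hk2
    rw [hx, hy, List.append_assoc, List.append_assoc]
    simp only [List.getElem?_append, List.length_cons, List.length_nil]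
    split_ifs with h h'
    · rfl
    · exfalso; omega
    · rfl

/-- Independent subsets of `range r`. -/
def IndepF (r : ℕ) : Finset (Finset ℕ) :=
  (Finset.range r).powerset.filter fun S => ∀ j ∈ S, j + 1 ∉ S

lemma mem_IndepF {r : ℕ} {S : Finset ℕ} :
    S ∈ IndepF r ↔ (∀ j ∈ S, j < r) ∧ ∀ j ∈ S, j + 1 ∉ S := by
  simp [IndepF, Finset.subset_iff]

lemma empty_mem_IndepF (r : ℕ) : ∅ ∈ IndepF r := by simp [mem_IndepF]

lemma card_IndepF : ∀ r : ℕ, (IndepF r).card = Nat.fib (r + 2) := by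
  have key : ∀ n : ℕ, (IndepF (n + 2)).card = (IndepF (n + 1)).card + (IndepF n).card := by
    intro n
    rw [← Finset.card_filter_add_card_filter_not
      (p := fun S => (n + 1) ∉ S) (s := IndepF (n + 2))]
    congr 1
    · congr 1
      ext S
      simp only [Finset.mem_filter, mem_IndepF]
      constructor
      · rintro ⟨⟨h1, h2⟩, h3⟩
        refine ⟨fun j hj => ?_, h2⟩
        have hlt := h1 j hj
        by_cases h : j = n + 1
        · exact absurd (h ▸ hj) h3
        · omega
      · rintro ⟨h1, h2⟩
        exact ⟨⟨fun j hj => by have := h1 j hj; omega, h2⟩, fun h => by have := h1 _ h; omega⟩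
    · apply Finset.card_nbij (fun S => S.erase (n + 1))
      · intro S hS
        simp only [Finset.mem_coe, Finset.mem_filter, mem_IndepF, not_not] at hS
        obtain ⟨⟨h1, h2⟩, h3⟩ := hS
        rw [Finset.mem_coe, mem_IndepF]
        constructor
        · intro j hj
          rw [Finset.mem_erase] at hj
          have hlt := h1 j hj.2
          have : j ≠ n := by
            rintro rfl
            exact h2 j hj.2 h3
          omega
        · intro j hj
          rw [Finset.mem_erase] at hj ⊢
          intro hc
          exact h2 j hj.2 hc.2
      · intro S hS T hT h
        simp only [Finset.mem_coe, Finset.mem_filter, not_not] at hS hT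
        have h' : S.erase (n+1) = T.erase (n+1) := h
        have : insert (n+1) (S.erase (n+1)) = insert (n+1) (T.erase (n+1)) := by rw [h']
        rwa [Finset.insert_erase hS.2, Finset.insert_erase hT.2] at this
      · intro T hT
        simp only [Finset.mem_coe, mem_IndepF] at hT
        refine ⟨insert (n+1) T, ?_, ?_⟩
        · simp only [Finset.mem_coe, Finset.mem_filter, mem_IndepF, not_not]
          refine ⟨⟨?_, ?_⟩, Finset.mem_insert_self _ _⟩
          · intro j hj
            rcases Finset.mem_insert.mp hj with rfl | hj
            · omega
            · have := hT.1 j hj; omega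
          · intro j hj hc
            rcases Finset.mem_insert.mp hj with rfl | hj
            · rcases Finset.mem_insert.mp hc with h | h
              · omega
              · have := hT.1 _ h; omega
            · rcases Finset.mem_insert.mp hc with h | h
              · have := hT.1 _ hj; omega
              · exact hT.2 j hj h
        · show (insert (n+1) T).erase (n+1) = T
          rw [Finset.erase_insert]
          intro hc
          have := hT.1 _ hc; omega
  intro r
  induction r using Nat.strong_induction_on with
  | _ r ih =>
    match r with
    | 0 => decide
    | 1 => decide
    | (n + 2) =>
      rw [key n, ih (n+1) (by omega), ih n (by omega)]
      have h1 := Nat.fib_add_two (n := n + 2)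
      have e1 : Nat.fib (n+2+1) = Nat.fib (n+1+2) := congrArg Nat.fib (by omega)
      omega

lemma a_ne_b {M : CoxeterMatrix B} {a : B} {b : ℕ → B} {r : ℕ}
    (hab : ∀ k < r, M a (b k) = 3) {k : ℕ} (hk : k < r) : a ≠ b k := by
  intro h
  have h3 := hab k hk
  rw [← h, M.diagonal] at h3
  omega

/-- The braid move flipping shadow `j` (going from `S.erase j` to `S`). -/
lemma isBraidMove_insert {M : CoxeterMatrix B} {a : B} {b : ℕ → B} {r : ℕ}
    (hab : ∀ k < r, M a (b k) = 3) {S : Finset ℕ} (hS : S ∈ IndepF r) {j : ℕ}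
    (hj : j ∈ S) :
    IsBraidMove M (fibWord a b r (S.erase j)) (fibWord a b r S) := by
  obtain ⟨hsub, hind⟩ := mem_IndepF.mp hS
  have hjr : j < r := hsub j hj
  have hj1 : j + 1 ∉ S := hind j hj
  have hjprev : ¬(1 ≤ j ∧ j - 1 ∈ S) := by
    rintro ⟨h1, h2⟩
    have := hind (j-1) h2
    rw [(by omega : j - 1 + 1 = j)] at this
    exact this hj
  have hidx : 2*j+2 = 2*(j+1) := by ring
  apply isBraidMove_of (i := 2*j) (s := a) (t := b j) (hab j hjr)
  · rw [fibWord_getElem?_lt _ _ _ _ (by omega), letr_even_of_not]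
    · rintro ⟨h1, h2⟩
      rw [Finset.mem_erase] at h2
      exact hjprev ⟨h1, h2.2⟩
    · simp
  · rw [fibWord_getElem?_lt _ _ _ _ (by omega), letr_odd, if_neg (by simp)]
  · rw [hidx, fibWord_getElem?_lt _ _ _ _ (by omega), letr_even_of_not]
    · rintro ⟨h1, h2⟩
      rw [(by omega : j + 1 - 1 = j), Finset.mem_erase] at h2
      exact h2.1 rfl
    · rw [Finset.mem_erase]
      rintro ⟨h1, h2⟩
      exact hj1 h2
  · rw [fibWord_getElem?_lt _ _ _ _ (by omega), letr_even_of_mem _ _ hjprev hj]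
  · rw [fibWord_getElem?_lt _ _ _ _ (by omega), letr_odd, if_pos hj]
  · rw [hidx, fibWord_getElem?_lt _ _ _ _ (by omega), letr_even_of_prev]
    · norm_num
    · omega
    · rw [(by omega : j + 1 - 1 = j)]; exact hj
  · intro k hk0 hk1 hk2
    rw [fibWord_getElem?, fibWord_getElem?]
    split_ifs with h
    · congr 1
      exact letr_congr_outside (j := j)
        (fun m hm => by simp [Finset.mem_erase, hm]) hk0 hk1 hk2
    · rfl

/-- Identify the result of a braid move with a `fibWord`. -/
lemma eq_fibWord_of_move {a : B} {b : ℕ → B} {r : ℕ} {S T : Finset ℕ} {γ : List B}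
    {j : ℕ} (hj : j < r)
    (hy0 : γ[2*j]? = some (letr a b T (2*j)))
    (hy1 : γ[2*j+1]? = some (letr a b T (2*j+1)))
    (hy2 : γ[2*j+2]? = some (letr a b T (2*j+2)))
    (hagree : ∀ k, k ≠ 2*j → k ≠ 2*j+1 → k ≠ 2*j+2 → (fibWord a b r S)[k]? = γ[k]?)
    (hmem : ∀ m, m ≠ j → (m ∈ S ↔ m ∈ T)) :
    γ = fibWord a b r T := by
  apply List.ext_getElem?
  intro n
  rw [fibWord_getElem?]
  by_cases h0 : n = 2*j
  · subst h0; rw [if_pos (by omega)]; exact hy0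
  by_cases h1 : n = 2*j+1
  · subst h1; rw [if_pos (by omega)]; exact hy1
  by_cases h2 : n = 2*j+2
  · subst h2; rw [if_pos (by omega)]; exact hy2
  rw [← hagree n h0 h1 h2, fibWord_getElem?]
  split_ifs with h
  · exact congrArg some (letr_congr_outside hmem h0 h1 h2)
  · rfl

/-- Any braid move out of a `fibWord` lands on a `fibWord`. -/
lemma move_analysis {M : CoxeterMatrix B} (htf : TriangleFree M) {a : B} {b : ℕ → B}
    {r : ℕ} (hab : ∀ k < r, M a (b k) = 3)
    (hshadow : ∀ i, ClassHasShadowAt M (fibWord a b r ∅) i → ∃ j < r, i = 2 * j)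
    {S : Finset ℕ} (hS : S ∈ IndepF r)
    (hmem : fibWord a b r S ∈ BraidClass M (fibWord a b r ∅))
    {γ : List B} (hmv : IsBraidMove M (fibWord a b r S) γ) :
    ∃ T ∈ IndepF r, γ = fibWord a b r T := by
  obtain ⟨hsub, hind⟩ := mem_IndepF.mp hS
  obtain ⟨i, s, t, hst, hx0, hx1, hx2, hy0, hy1, hy2, hagree⟩ := isBraidMove_elim hmv
  obtain ⟨j, hjr, rfl⟩ := hshadow i ⟨_, hmem, s, t, hst, hx0, hx1, hx2⟩
  have hidx : 2*j+2 = 2*(j+1) := by ring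
  rw [fibWord_getElem?_lt _ _ _ _ (by omega)] at hx0 hx1 hx2
  injection hx0 with hx0
  injection hx1 with hx1
  injection hx2 with hx2
  have hagree' : ∀ k, k ≠ 2*j → k ≠ 2*j+1 → k ≠ 2*j+2 → (fibWord a b r S)[k]? = γ[k]? :=
    hagree
  by_cases hjS : j ∈ S
  · -- undo the flip at shadow `j`
    have hprev : ¬(1 ≤ j ∧ j - 1 ∈ S) := by
      rintro ⟨h1, h2⟩
      have := hind (j-1) h2
      rw [(by omega : j - 1 + 1 = j)] at this
      exact this hjS
    have hnext : j + 1 ∉ S := hind j hjS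
    have hs : s = b j := by rw [← hx0, letr_even_of_mem _ _ hprev hjS]
    have ht : t = a := by rw [← hx1, letr_odd, if_pos hjS]
    have hTm : S.erase j ∈ IndepF r := by
      rw [mem_IndepF]
      constructor
      · intro m hm; exact hsub m (Finset.mem_of_mem_erase hm)
      · intro m hm hc
        exact hind m (Finset.mem_of_mem_erase hm) (Finset.mem_of_mem_erase hc)
    refine ⟨S.erase j, hTm, eq_fibWord_of_move hjr ?_ ?_ ?_ hagree' ?_⟩
    · rw [hy0, ht]
      congr 1
      rw [letr_even_of_not]
      · rintro ⟨h1, h2⟩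
        rw [Finset.mem_erase] at h2
        exact hprev ⟨h1, h2.2⟩
      · simp
    · rw [hy1, hs]
      congr 1
      rw [letr_odd, if_neg (by simp)]
    · rw [hy2, ht]
      congr 1
      rw [hidx, letr_even_of_not]
      · rintro ⟨h1, h2⟩
        rw [(by omega : j + 1 - 1 = j), Finset.mem_erase] at h2
        exact h2.1 rfl
      · rw [Finset.mem_erase]; rintro ⟨-, h2⟩; exact hnext h2
    · intro m hm; simp [Finset.mem_erase, hm]
  · by_cases hprev : 1 ≤ j ∧ j - 1 ∈ S
    · -- impossible by triangle-freeness
      exfalso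
      have hj1r : j - 1 < r := by omega
      have hs : s = b (j-1) := by rw [← hx0, letr_even_of_prev _ _ hprev.1 hprev.2]
      have ht : t = b j := by rw [← hx1, letr_odd, if_neg hjS]
      have h3 : M (b (j-1)) (b j) = 3 := by rw [← hs, ← ht]; exact hst
      have ne3 : b (j-1) ≠ b j := by
        intro h
        rw [h, M.diagonal] at h3
        omega
      have hM1 : M (b (j-1)) a = 3 := by rw [M.symmetric]; exact hab _ hj1r
      exact htf (b (j-1)) a (b j) (a_ne_b hab hj1r).symm (a_ne_b hab hjr) ne3
        hM1 (hab _ hjr) h3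
    · by_cases hnext : j + 1 ∈ S
      · -- impossible: the two ends of the shadow would differ
        exfalso
        have hs : s = a := by rw [← hx0, letr_even_of_not _ _ hprev hjS]
        have hs2 : s = b (j+1) := by
          rw [← hx2, hidx, letr_even]
          rw [if_neg (by rintro ⟨-, h⟩; rw [(by omega : j + 1 - 1 = j)] at h; exact hjS h),
            if_pos hnext]
        exact a_ne_b hab (hsub _ hnext) (hs ▸ hs2)
      · -- perform the flip at shadow `j`
        have hs : s = a := by rw [← hx0, letr_even_of_not _ _ hprev hjS]
        have ht : t = b j := by rw [← hx1, letr_odd, if_neg hjS]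
        have hTm : insert j S ∈ IndepF r := by
          rw [mem_IndepF]
          constructor
          · intro m hm
            rcases Finset.mem_insert.mp hm with rfl | hm
            · exact hjr
            · exact hsub m hm
          · intro m hm hc
            rcases Finset.mem_insert.mp hm with rfl | hm
            · rcases Finset.mem_insert.mp hc with h | h
              · omega
              · exact hnext h
            · rcases Finset.mem_insert.mp hc with h | h
              · exact hprev ⟨by omega, by rw [← h, (by omega : m + 1 - 1 = m)]; exact hm⟩
              · exact hind m hm h
        refine ⟨insert j S, hTm, eq_fibWord_of_move hjr ?_ ?_ ?_ hagree' ?_⟩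
        · rw [hy0, ht]
          congr 1
          rw [letr_even_of_mem]
          · rintro ⟨h1, h2⟩
            rcases Finset.mem_insert.mp h2 with h | h
            · omega
            · exact hprev ⟨h1, h⟩
          · exact Finset.mem_insert_self _ _
        · rw [hy1, hs]
          congr 1
          rw [letr_odd, if_pos (Finset.mem_insert_self _ _)]
        · rw [hy2, ht]
          congr 1
          rw [hidx, letr_even_of_prev _ _ (by omega)
            (by rw [(by omega : j + 1 - 1 = j)]; exact Finset.mem_insert_self _ _),
            (by omega : j + 1 - 1 = j)]
        · intro m hm; simp [Finset.mem_insert, hm]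

/-- Every `fibWord` over an independent set is reachable from the base word. -/
lemma reach {M : CoxeterMatrix B} {a : B} {b : ℕ → B} {r : ℕ}
    (hab : ∀ k < r, M a (b k) = 3) :
    ∀ S ∈ IndepF r, BraidEquiv M (fibWord a b r ∅) (fibWord a b r S) := by
  intro S
  induction S using Finset.strongInduction with
  | _ S ih =>
    intro hS
    rcases S.eq_empty_or_nonempty with rfl | ⟨j, hj⟩
    · exact Relation.ReflTransGen.refl
    · have hS' : S.erase j ∈ IndepF r := by
        rw [mem_IndepF] at hS ⊢
        exact ⟨fun m hm => hS.1 m (Finset.mem_of_mem_erase hm),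
          fun m hm hc => hS.2 m (Finset.mem_of_mem_erase hm) (Finset.mem_of_mem_erase hc)⟩
      exact Relation.ReflTransGen.tail (ih _ (Finset.erase_ssubset hj) hS')
        (isBraidMove_insert hab hS hj)

/-- Conversely, everything in the braid class of the base word is a `fibWord`. -/
lemma class_sub {M : CoxeterMatrix B} (htf : TriangleFree M) {a : B} {b : ℕ → B}
    {r : ℕ} (hab : ∀ k < r, M a (b k) = 3)
    (hshadow : ∀ i, ClassHasShadowAt M (fibWord a b r ∅) i → ∃ j < r, i = 2 * j) :
    ∀ β, BraidEquiv M (fibWord a b r ∅) β → ∃ S ∈ IndepF r, β = fibWord a b r S := by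
  intro β h
  induction h with
  | refl => exact ⟨∅, empty_mem_IndepF r, rfl⟩
  | tail h1 h2 ih =>
    obtain ⟨S, hS, rfl⟩ := ih
    exact move_analysis htf hab hshadow hS h1 h2

end Aux

variable {W : Type*} [Group W] {M : CoxeterMatrix B}

/-- the braid class of a Fibonacci link of rank `r` has exactly
`F_{r+2}` elements. -/
theorem statement_16 {B W : Type*} [Group W] {M : CoxeterMatrix B}
    (cs : CoxeterSystem M W) (hsl : SimplyLaced M) (htf : TriangleFree M)
    (φ : List B) (r : ℕ) (hfib : IsFibLink cs φ r) :
    (BraidClass M φ).ncard = Nat.fib (r + 2) := by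
  classical
  obtain ⟨⟨hred, hlen, hshadow⟩, hfs⟩ := hfib
  have hlen0 : 0 < φ.length := by rw [hlen]; omega
  obtain ⟨a₀, ha₀⟩ : ∃ x, φ[0]? = some x := ⟨_, List.getElem?_eq_getElem hlen0⟩
  have hsh : ∀ j < r, HasShadowAt M φ (2*j) := fun j hj =>
    hfs _ ((hshadow _).mpr ⟨j, hj, rfl⟩)
  have hch : ∀ j : ℕ, ∃ s t : B, j < r →
      M s t = 3 ∧ φ[2*j]? = some s ∧ φ[2*j+1]? = some t ∧ φ[2*j+2]? = some s := by
    intro j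
    by_cases hj : j < r
    · obtain ⟨s, t, h⟩ := hsh j hj
      exact ⟨s, t, fun _ => h⟩
    · exact ⟨a₀, a₀, fun h => absurd h hj⟩
  choose sf tf hch using hch
  have hs_eq : ∀ j, j < r → sf j = a₀ := by
    intro j
    induction j with
    | zero =>
      intro hj
      have h := (hch 0 hj).2.1
      rw [(by norm_num : 2*0 = 0), ha₀] at h
      exact (Option.some.inj h).symm
    | succ j ihj =>
      intro hj
      have h1 := (hch j (by omega)).2.2.2
      have h2 := (hch (j+1) hj).2.1
      rw [(by ring : 2*(j+1) = 2*j+2), h1] at h2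
      have h3 := Option.some.inj h2
      rw [← h3, ihj (by omega)]
  have hab : ∀ k < r, M a₀ (tf k) = 3 := by
    intro k hk
    have h := (hch k hk).1
    rwa [hs_eq k hk] at h
  have heven : ∀ k, k ≤ r → φ[2*k]? = some a₀ := by
    intro k hk
    rcases k with _ | j
    · rw [(by norm_num : 2*0 = 0)]; exact ha₀
    · have h := (hch j (by omega)).2.2.2
      rw [(by ring : 2*(j+1) = 2*j+2), h, hs_eq j (by omega)]
  have hodd : ∀ k, k < r → φ[2*k+1]? = some (tf k) := fun k hk => (hch k hk).2.2.1
  have hφw : φ = fibWord a₀ tf r ∅ := by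
    apply List.ext_getElem?
    intro n
    rw [fibWord_getElem?]
    by_cases hn : n < 2*r+1
    · rw [if_pos hn]
      obtain ⟨m, rfl | rfl⟩ : ∃ m, n = 2*m ∨ n = 2*m+1 := ⟨n/2, by omega⟩
      · rw [letr_even, if_neg (by simp), if_neg (by simp)]
        exact heven m (by omega)
      · rw [letr_odd, if_neg (by simp)]
        exact hodd m (by omega)
    · rw [if_neg hn, List.getElem?_eq_none (by rw [hlen]; omega)]
  rw [hφw] at hshadow ⊢
  have hshadow' : ∀ i, ClassHasShadowAt M (fibWord a₀ tf r ∅) i → ∃ j < r, i = 2*j :=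
    fun i hi => (hshadow i).mp hi
  have himg : BraidClass M (fibWord a₀ tf r ∅) = ↑((IndepF r).image (fibWord a₀ tf r)) := by
    ext β
    simp only [Finset.coe_image, Set.mem_image, Finset.mem_coe]
    constructor
    · intro hβ
      obtain ⟨S, hS, rfl⟩ := class_sub htf hab hshadow' β hβ
      exact ⟨S, hS, rfl⟩
    · rintro ⟨S, hS, rfl⟩
      exact reach hab S hS
  have hinj : Set.InjOn (fibWord a₀ tf r) ↑(IndepF r) := by
    intro S hS T hT h
    simp only [Finset.mem_coe, mem_IndepF] at hS hT
    ext j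
    by_cases hj : j < r
    · have h2 := congrArg (fun l => l[2*j+1]?) h
      simp only [fibWord_getElem?_lt _ _ _ _ (by omega : 2*j+1 < 2*r+1),
        letr_odd] at h2
      have hne := a_ne_b hab hj
      have h3 := Option.some.inj h2
      constructor
      · intro hmem
        by_contra h4
        rw [if_pos hmem, if_neg h4] at h3
        exact hne h3
      · intro hmem
        by_contra h4
        rw [if_neg h4, if_pos hmem] at h3
        exact hne h3.symm
    · constructor
      · intro hmem; exact absurd (hS.1 j hmem) hj
      · intro hmem; exact absurd (hT.1 j hmem) hj
  rw [himg, Set.ncard_coe_finset, Finset.card_image_of_injOn hinj, card_IndepF]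


end BraidFormal
end
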